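/- Let T₁ be a compact self-adjoint operator and T₂ a self-adjoint trace-class operator on a separable Hilbert space. Then for every s > 0, (1/π) ∫_ℝ n_±(s; T₁ + t T₂) dt/(1+t²) ≤ n_±(s/2; T₁) + (2/(πs)) ‖T₂‖₁. -/

import Mathlib

open scoped ENNReal
open MeasureTheory

/-- Counting of eigenvalues (with multiplicity) of `T` lying in the real set `S`. -/
noncomputable def eigCount {H : Type*} [NormedAddCommGroup H] [InnerProductSpace ℂ H]
    (T : H →L[ℂ] H) (S : Set ℝ) : ℝ≥0∞ :=
  ∑' μ : S, (Module.finrank ℂ (Module.End.eigenspace (T : H →ₗ[ℂ] H) (μ : ℂ)) : ℝ≥0∞)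

/-- The trace norm `‖T‖₁ = ∑ |μ|` over eigenvalues with multiplicity (for compact
self-adjoint `T`). -/
noncomputable def traceNormE {H : Type*} [NormedAddCommGroup H] [InnerProductSpace ℂ H]
    (T : H →L[ℂ] H) : ℝ≥0∞ :=
  ∑' μ : ℝ, (Module.finrank ℂ (Module.End.eigenspace (T : H →ₗ[ℂ] H) (μ : ℂ)) : ℝ≥0∞)
    * ENNReal.ofReal |μ|

section prelim

lemma arctan_le_self' {x : ℝ} (hx : 0 ≤ x) : Real.arctan x ≤ x := by
  have h0 : Real.arctan 0 ≤ Real.arctan x := Real.arctan_strictMono.monotone hx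
  rw [Real.arctan_zero] at h0
  rcases eq_or_lt_of_le h0 with h | h
  · rw [← h]; exact hx
  · exact le_of_lt (by simpa [Real.tan_arctan] using Real.lt_tan h (Real.arctan_lt_pi_div_two x))

variable {H : Type*} [NormedAddCommGroup H] [InnerProductSpace ℂ H]

local notation "⟪" x ", " y "⟫" => @inner ℂ _ _ x y

lemma eig_isClosed (T : H →L[ℂ] H) (μ : ℂ) :
    IsClosed ((Module.End.eigenspace (T : H →ₗ[ℂ] H) μ : Submodule ℂ H) : Set H) := by
  have h : ((Module.End.eigenspace (T : H →ₗ[ℂ] H) μ : Submodule ℂ H) : Set H)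
      = (fun x => T x - μ • x) ⁻¹' {0} := by
    ext x
    simp [Module.End.mem_eigenspace_iff, sub_eq_zero]
  rw [h]
  exact IsClosed.preimage (T.continuous.sub (continuous_const_smul μ)) isClosed_singleton

lemma eig_finiteDimensional (T : H →L[ℂ] H) (hc : IsCompactOperator T) {μ : ℂ} (hμ : μ ≠ 0) :
    FiniteDimensional ℂ (Module.End.eigenspace (T : H →ₗ[ℂ] H) μ) := by
  set V := Module.End.eigenspace (T : H →ₗ[ℂ] H) μ with hV
  obtain ⟨K, hKc, hK⟩ := hc.image_closedBall_subset_compact (1 : ℝ)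
  have hS : IsCompact ((V : Set H) ∩ Metric.closedBall 0 1) := by
    refine IsCompact.of_isClosed_subset (hKc.smul μ⁻¹)
      ((eig_isClosed T μ).inter Metric.isClosed_closedBall) ?_
    rintro x ⟨hxV, hx1⟩
    have hTx : T x = μ • x := (Module.End.mem_eigenspace_iff).1 hxV
    refine ⟨T x, hK ⟨x, hx1, rfl⟩, ?_⟩
    simp [hTx, smul_smul, inv_mul_cancel₀ hμ]
  have h2 : IsCompact (Metric.closedBall (0 : V) 1) := by
    rw [Topology.IsEmbedding.subtypeVal.isCompact_iff]
    convert hS using 1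
    ext x
    simp only [Set.mem_image, Metric.mem_closedBall, dist_zero_right, Set.mem_inter_iff,
      SetLike.mem_coe]
    constructor
    · rintro ⟨y, hy, rfl⟩; exact ⟨y.2, hy⟩
    · rintro ⟨hxV, hx⟩; exact ⟨⟨x, hxV⟩, hx, rfl⟩
  exact FiniteDimensional.of_isCompact_closedBall ℂ zero_lt_one h2

lemma eig_smul (T : H →L[ℂ] H) {a : ℂ} (ha : a ≠ 0) (μ : ℂ) :
    Module.End.eigenspace ((a • T : H →L[ℂ] H) : H →ₗ[ℂ] H) μ
      = Module.End.eigenspace (T : H →ₗ[ℂ] H) (μ / a) := by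
  ext x
  simp only [Module.End.mem_eigenspace_iff, ContinuousLinearMap.coe_smul,
    LinearMap.smul_apply, ContinuousLinearMap.coe_coe]
  constructor
  · intro h
    have := congrArg (fun z => a⁻¹ • z) h
    simpa [smul_smul, inv_mul_cancel₀ ha, div_eq_inv_mul] using this
  · intro h
    rw [h, smul_smul, mul_div_cancel₀ _ ha]

lemma eig_neg (T : H →L[ℂ] H) (μ : ℂ) :
    Module.End.eigenspace ((-T : H →L[ℂ] H) : H →ₗ[ℂ] H) μ
      = Module.End.eigenspace (T : H →ₗ[ℂ] H) (-μ) := by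
  ext x
  simp only [Module.End.mem_eigenspace_iff, ContinuousLinearMap.coe_neg, LinearMap.neg_apply,
    ContinuousLinearMap.coe_coe, neg_smul]
  exact neg_eq_iff_eq_neg

end prelim

section core
variable {H : Type*} [NormedAddCommGroup H] [InnerProductSpace ℂ H] [CompleteSpace H]

local notation "⟪" x ", " y "⟫" => @inner ℂ _ _ x y

/-- The span of eigenspaces with eigenvalue `> c`. -/
noncomputable def topSp (T : H →L[ℂ] H) (c : ℝ) : Submodule ℂ H :=
  ⨆ μ : Set.Ioi c, Module.End.eigenspace (T : H →ₗ[ℂ] H) ((μ : ℝ) : ℂ)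

lemma topSp_invariant {T : H →L[ℂ] H} (hsa : IsSelfAdjoint T) (c : ℝ)
    {y : H} (hy : y ∈ (topSp T c)ᗮ) : T y ∈ (topSp T c)ᗮ := by
  have hsym := hsa.isSymmetric
  rw [Submodule.mem_orthogonal]
  intro u hu
  refine Submodule.iSup_induction (motive := fun z => ⟪z, T y⟫ = 0) _ hu ?_ (by simp) ?_
  · rintro ⟨μ, hμ⟩ x hx
    have hTx : T x = ((μ : ℝ) : ℂ) • x := Module.End.mem_eigenspace_iff.1 hx
    have h2 : ⟪x, y⟫ = 0 := (Submodule.mem_orthogonal _ y).1 hy x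
      ((le_iSup (fun μ : Set.Ioi c => Module.End.eigenspace (T : H →ₗ[ℂ] H) ((μ : ℝ) : ℂ))
        ⟨μ, hμ⟩) hx)
    calc ⟪x, T y⟫ = ⟪T x, y⟫ := (hsym x y).symm
    _ = ((starRingEnd ℂ) ((μ : ℝ) : ℂ)) * ⟪x, y⟫ := by rw [hTx, inner_smul_left]
    _ = 0 := by rw [h2, mul_zero]
  · intro x z hx hz
    rw [inner_add_left, hx, hz, add_zero]

set_option maxHeartbeats 1000000 in
lemma quad_le_on_orth (T : H →L[ℂ] H) (hc : IsCompactOperator T) (hsa : IsSelfAdjoint T)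
    {c : ℝ} (hcpos : 0 < c) :
    ∀ x ∈ (topSp T c)ᗮ, (⟪T x, x⟫).re ≤ c * ‖x‖ ^ 2 := by
  have hsym := hsa.isSymmetric
  set G := (topSp T c)ᗮ with hGdef
  by_contra hcon
  push_neg at hcon
  obtain ⟨x, hxG, hx⟩ := hcon
  -- scaling helper
  have hscale : ∀ (z : H) (a : ℝ), (⟪T ((a : ℂ) • z), (a : ℂ) • z⟫).re
      = a ^ 2 * (⟪T z, z⟫).re := by
    intro z a
    have h1 : T ((a : ℂ) • z) = (a : ℂ) • T z := T.map_smul _ _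
    rw [h1, inner_smul_left, inner_smul_right, Complex.conj_ofReal]
    simp only [Complex.mul_re, Complex.ofReal_re, Complex.ofReal_im, zero_mul, sub_zero]
    ring
  have hnormsq : ∀ z : H, (⟪z, z⟫).re = ‖z‖ ^ 2 := by
    intro z
    have h := inner_self_eq_norm_sq (𝕜 := ℂ) (E := H) z
    simpa using h
  have hx0 : x ≠ 0 := by
    rintro rfl
    simp at hx
  have hxnorm : 0 < ‖x‖ := norm_pos_iff.2 hx0
  set u := ((‖x‖⁻¹ : ℝ) : ℂ) • x with hu_def
  have huG : u ∈ G := Submodule.smul_mem _ _ hxG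
  have hu1 : ‖u‖ = 1 := by
    rw [hu_def, norm_smul]
    simp [abs_of_pos (inv_pos.2 hxnorm), inv_mul_cancel₀ hxnorm.ne']
  have huq : c < (⟪T u, u⟫).re := by
    rw [hu_def, hscale]
    have h1 : (‖x‖⁻¹) ^ 2 * (c * ‖x‖ ^ 2) < (‖x‖⁻¹) ^ 2 * (⟪T x, x⟫).re :=
      mul_lt_mul_of_pos_left hx (by positivity)
    have h2 : (‖x‖⁻¹) ^ 2 * (c * ‖x‖ ^ 2) = c := by field_simp
    linarith
  set R := (fun y => (⟪T y, y⟫).re) '' {y : H | y ∈ G ∧ ‖y‖ = 1} with hRdef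
  have hRne : R.Nonempty := ⟨_, ⟨u, ⟨huG, hu1⟩, rfl⟩⟩
  have hRbdd : BddAbove R := by
    refine ⟨‖T‖, ?_⟩
    rintro r ⟨y, ⟨-, hy1⟩, rfl⟩
    calc (⟪T y, y⟫).re ≤ ‖⟪T y, y⟫‖ := Complex.re_le_norm _
    _ ≤ ‖T y‖ * ‖y‖ := by exact norm_inner_le_norm _ _
    _ ≤ ‖T‖ * ‖y‖ * ‖y‖ := by
        have := T.le_opNorm y
        nlinarith [norm_nonneg y]
    _ = ‖T‖ := by rw [hy1]; ring
  set M := sSup R with hMdef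
  have hcM : c < M := lt_of_lt_of_le huq (le_csSup hRbdd ⟨u, ⟨huG, hu1⟩, rfl⟩)
  have hMpos : 0 < M := hcpos.trans hcM
  have hMle : ∀ z, z ∈ G → (⟪T z, z⟫).re ≤ M * ‖z‖ ^ 2 := by
    intro z hz
    by_cases hz0 : z = 0
    · simp [hz0]
    · have hzn : 0 < ‖z‖ := norm_pos_iff.2 hz0
      have h1 : (⟪T (((‖z‖⁻¹ : ℝ) : ℂ) • z), ((‖z‖⁻¹ : ℝ) : ℂ) • z⟫).re ≤ M := by
        refine le_csSup hRbdd ⟨_, ⟨Submodule.smul_mem _ _ hz, ?_⟩, rfl⟩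
        rw [norm_smul]
        simp [abs_of_pos (inv_pos.2 hzn), inv_mul_cancel₀ hzn.ne']
      rw [hscale] at h1
      have h2 : (‖z‖⁻¹) ^ 2 * ‖z‖ ^ 2 = 1 := by field_simp
      have h3 : (‖z‖⁻¹ ^ 2 * (⟪T z, z⟫).re) * ‖z‖ ^ 2 = (⟪T z, z⟫).re := by
        field_simp
      linarith [mul_le_mul_of_nonneg_right h1 (sq_nonneg ‖z‖), h3]
  obtain ⟨rs, -, hrs_tendsto, hrs_mem⟩ := exists_seq_tendsto_sSup hRne hRbdd
  choose xs hmem heq using hrs_mem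
  have hxsG : ∀ n, xs n ∈ G := fun n => (hmem n).1
  have hxs1 : ∀ n, ‖xs n‖ = 1 := fun n => (hmem n).2
  -- the quadratic form B
  set B : H → H → ℝ := fun z w => M * (⟪z, w⟫).re - (⟪T z, w⟫).re with hBdef
  have hB_nonneg : ∀ z, z ∈ G → 0 ≤ B z z := by
    intro z hz
    have := hMle z hz
    simp only [hBdef, hnormsq]
    linarith
  have hsym' : ∀ a b : H, ⟪T a, b⟫ = ⟪a, T b⟫ := fun a b => hsym a b
  have hswap1 : ∀ z w : H, (⟪w, z⟫).re = (⟪z, w⟫).re := by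
    intro z w
    rw [← inner_conj_symm z w, Complex.conj_re]
  have hswap2 : ∀ z w : H, (⟪T w, z⟫).re = (⟪T z, w⟫).re := by
    intro z w
    rw [hsym' w z, ← inner_conj_symm w (T z), Complex.conj_re]
  have hinner_exp : ∀ (p q z w : H) (t : ℝ), (⟪p + (t : ℂ) • q, z + (t : ℂ) • w⟫).re
      = (⟪p, z⟫).re + t * (⟪p, w⟫).re + t * (⟪q, z⟫).re + t ^ 2 * (⟪q, w⟫).re := by
    intro p q z w t
    simp only [inner_add_left, inner_add_right, inner_smul_left, inner_smul_right,
      Complex.conj_ofReal, Complex.add_re, Complex.mul_re, Complex.ofReal_re,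
      Complex.ofReal_im, zero_mul, sub_zero]
    ring
  have hCS : ∀ z w, z ∈ G → w ∈ G → (B z w) ^ 2 ≤ B z z * B w w := by
    intro z w hz hw
    have hquad : ∀ t : ℝ, 0 ≤ B w w * (t * t) + (2 * B z w) * t + B z z := by
      intro t
      have hmem' : z + (t : ℂ) • w ∈ G := Submodule.add_mem _ hz (Submodule.smul_mem _ _ hw)
      have h0 := hB_nonneg _ hmem'
      have hexp : B (z + (t : ℂ) • w) (z + (t : ℂ) • w)
          = B w w * (t * t) + (2 * B z w) * t + B z z := by
        simp only [hBdef]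
        rw [hinner_exp]
        have hTexp : T (z + (t : ℂ) • w) = T z + (t : ℂ) • T w := by
          rw [map_add, T.map_smul]
        rw [hTexp, hinner_exp]
        rw [hswap1 z w, hswap2 z w]
        ring
      rwa [hexp] at h0
    have hd := discrim_le_zero hquad
    rw [discrim] at hd
    nlinarith [hd]
  -- the defect sequence
  set y : ℕ → H := fun n => ((M : ℂ)) • (xs n) - T (xs n) with hydef
  have hyG : ∀ n, y n ∈ G := fun n =>
    Submodule.sub_mem _ (Submodule.smul_mem _ _ (hxsG n)) (topSp_invariant hsa c (hxsG n))
  have hBxy : ∀ n, B (xs n) (y n) = ‖y n‖ ^ 2 := by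
    intro n
    have : ⟪(M : ℂ) • (xs n) - T (xs n), y n⟫ = ⟪y n, y n⟫ := rfl
    have h2 : (⟪(M : ℂ) • (xs n) - T (xs n), y n⟫).re
        = M * (⟪xs n, y n⟫).re - (⟪T (xs n), y n⟫).re := by
      rw [inner_sub_left, inner_smul_left, Complex.conj_ofReal]
      simp [Complex.mul_re]
    simp only [hBdef]
    rw [← h2, this, hnormsq]
  have hByy : ∀ n, B (y n) (y n) ≤ (M + ‖T‖) * ‖y n‖ ^ 2 := by
    intro n
    have h1 : -(⟪T (y n), y n⟫).re ≤ ‖T‖ * ‖y n‖ ^ 2 := by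
      have ha : -‖⟪T (y n), y n⟫‖ ≤ (⟪T (y n), y n⟫).re := by
        have h1 : |(⟪T (y n), y n⟫).re| ≤ ‖⟪T (y n), y n⟫‖ :=
          Complex.abs_re_le_norm _
        have h2 := neg_le_abs ((⟪T (y n), y n⟫).re)
        linarith
      have hb : ‖⟪T (y n), y n⟫‖ ≤ ‖T (y n)‖ * ‖y n‖ := by
        exact norm_inner_le_norm _ _
      have hcn := T.le_opNorm (y n)
      nlinarith [norm_nonneg (y n)]
    simp only [hBdef, hnormsq]
    nlinarith [h1]
  have hBxx : ∀ n, B (xs n) (xs n) = M - rs n := by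
    intro n
    simp only [hBdef, hnormsq, hxs1 n, heq n]
    ring
  have hrsM : ∀ n, rs n ≤ M := fun n => le_csSup hRbdd ⟨xs n, ⟨hxsG n, hxs1 n⟩, heq n⟩
  have hybound : ∀ n, ‖y n‖ ^ 2 ≤ (M - rs n) * (M + ‖T‖) := by
    intro n
    have hcs := hCS (xs n) (y n) (hxsG n) (hyG n)
    rw [hBxy n, hBxx n] at hcs
    have h1 : (‖y n‖ ^ 2) ^ 2 ≤ (M - rs n) * ((M + ‖T‖) * ‖y n‖ ^ 2) := by
      calc (‖y n‖ ^ 2) ^ 2 ≤ (M - rs n) * B (y n) (y n) := hcs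
      _ ≤ (M - rs n) * ((M + ‖T‖) * ‖y n‖ ^ 2) := by
          have := hByy n
          have h0 : 0 ≤ M - rs n := by linarith [hrsM n]
          nlinarith [this, h0]
    by_cases hy0 : ‖y n‖ = 0
    · rw [hy0]
      have h0 : 0 ≤ M - rs n := by linarith [hrsM n]
      have : (0:ℝ) ≤ ‖T‖ := norm_nonneg _
      nlinarith
    · have : 0 < ‖y n‖ ^ 2 := by positivity
      nlinarith [h1]
  have hslim : Filter.Tendsto (fun n => (M - rs n) * (M + ‖T‖)) Filter.atTop (nhds 0) := by
    have h1 : Filter.Tendsto (fun n => M - rs n) Filter.atTop (nhds (M - M)) :=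
      Filter.Tendsto.sub tendsto_const_nhds hrs_tendsto
    rw [sub_self] at h1
    simpa using h1.mul_const (M + ‖T‖)
  have hynorm2 : Filter.Tendsto (fun n => ‖y n‖ ^ 2) Filter.atTop (nhds 0) :=
    squeeze_zero (fun n => sq_nonneg _) hybound hslim
  have hynorm : Filter.Tendsto (fun n => ‖y n‖) Filter.atTop (nhds 0) := by
    have hs : Filter.Tendsto (fun n => Real.sqrt (‖y n‖ ^ 2)) Filter.atTop
        (nhds (Real.sqrt 0)) := hynorm2.sqrt
    rw [Real.sqrt_zero] at hs
    have heqf : (fun n => Real.sqrt (‖y n‖ ^ 2)) = fun n => ‖y n‖ :=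
      funext fun n => Real.sqrt_sq (norm_nonneg _)
    rwa [heqf] at hs
  have hy_tendsto : Filter.Tendsto y Filter.atTop (nhds 0) :=
    tendsto_zero_iff_norm_tendsto_zero.2 hynorm
  -- compactness: extract convergent subsequence of T (xs n)
  obtain ⟨K, hKc, hKsub⟩ := hc.image_closedBall_subset_compact (1 : ℝ)
  have hTxsK : ∀ n, T (xs n) ∈ K := by
    intro n
    exact hKsub ⟨xs n, by simp [Metric.mem_closedBall, dist_zero_right, hxs1 n], rfl⟩
  obtain ⟨w, hwK, φ, hφmono, hw⟩ := hKc.tendsto_subseq hTxsK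
  set v := ((M : ℂ))⁻¹ • w with hvdef
  have hMc0 : ((M : ℂ)) ≠ 0 := by
    simp [Complex.ofReal_ne_zero]
    exact hMpos.ne'
  have hxrep : ∀ n, xs n = ((M : ℂ))⁻¹ • (y n + T (xs n)) := by
    intro n
    simp only [hydef, sub_add_cancel, smul_smul, inv_mul_cancel₀ hMc0, one_smul]
  have hyφ : Filter.Tendsto (fun k => y (φ k)) Filter.atTop (nhds 0) :=
    hy_tendsto.comp (hφmono.tendsto_atTop)
  have hsum : Filter.Tendsto (fun k => y (φ k) + T (xs (φ k))) Filter.atTop (nhds (0 + w)) :=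
    hyφ.add hw
  have hxv : Filter.Tendsto (fun k => xs (φ k)) Filter.atTop (nhds v) := by
    have h2 : Filter.Tendsto (fun k => ((M : ℂ))⁻¹ • (y (φ k) + T (xs (φ k))))
        Filter.atTop (nhds (((M : ℂ))⁻¹ • (0 + w))) := hsum.const_smul _
    rw [zero_add] at h2
    convert h2 using 2 with k
    exact hxrep (φ k)
  have hv1 : ‖v‖ = 1 := by
    have h1 : Filter.Tendsto (fun k => ‖xs (φ k)‖) Filter.atTop (nhds ‖v‖) := hxv.norm
    have h2 : Filter.Tendsto (fun k => ‖xs (φ k)‖) Filter.atTop (nhds 1) := by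
      have : (fun k => ‖xs (φ k)‖) = fun _ => (1 : ℝ) := funext fun k => hxs1 (φ k)
      rw [this]
      exact tendsto_const_nhds
    exact tendsto_nhds_unique h1 h2
  have hvG : v ∈ G := by
    have hclosed : IsClosed (G : Set H) := Submodule.isClosed_orthogonal _
    exact hclosed.mem_of_tendsto hxv (Filter.Eventually.of_forall fun k => hxsG (φ k))
  have hTv : T v = ((M : ℂ)) • v := by
    have h1 : Filter.Tendsto (fun k => T (xs (φ k))) Filter.atTop (nhds (T v)) :=
      (T.continuous.tendsto v).comp hxv
    have h2 : Filter.Tendsto (fun k => T (xs (φ k))) Filter.atTop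
        (nhds (((M : ℂ)) • v - 0)) := by
      have h3 : (fun k => T (xs (φ k))) = fun k => ((M : ℂ)) • (xs (φ k)) - y (φ k) := by
        funext k
        simp [hydef]
      rw [h3]
      exact (hxv.const_smul _).sub hyφ
    rw [sub_zero] at h2
    exact tendsto_nhds_unique h1 h2
  have hveig : v ∈ Module.End.eigenspace (T : H →ₗ[ℂ] H) ((M : ℝ) : ℂ) :=
    Module.End.mem_eigenspace_iff.2 hTv
  have hvtop : v ∈ topSp T c :=
    (le_iSup (fun μ : Set.Ioi c => Module.End.eigenspace (T : H →ₗ[ℂ] H) ((μ : ℝ) : ℂ))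
      ⟨M, hcM⟩) hveig
  have : ⟪v, v⟫ = 0 := (Submodule.mem_orthogonal _ v).1 hvG v hvtop
  have hv0 : v = 0 := inner_self_eq_zero.1 this
  rw [hv0, norm_zero] at hv1
  exact zero_ne_one hv1

end core

section finrk
variable {H : Type*} [NormedAddCommGroup H] [InnerProductSpace ℂ H] [CompleteSpace H]

local notation "⟪" x ", " y "⟫" => @inner ℂ _ _ x y

lemma finrank_biSup_orth {ι : Type*} (p : ι → Submodule ℂ H)
    (horth : ∀ i j, i ≠ j → ∀ x ∈ p i, ∀ y ∈ p j, ⟪x, y⟫ = 0) (F : Finset ι)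
    (hfd : ∀ i ∈ F, FiniteDimensional ℂ (p i)) :
    FiniteDimensional ℂ ↥(⨆ i ∈ F, p i)
      ∧ Module.finrank ℂ ↥(⨆ i ∈ F, p i) = ∑ i ∈ F, Module.finrank ℂ (p i) := by
  classical
  induction F using Finset.induction_on with
  | empty =>
    have h0 : (⨆ i ∈ (∅ : Finset ι), p i) = ⊥ := by simp
    rw [h0]
    exact ⟨inferInstance, by simp⟩
  | @insert a F ha ih =>
    have hfdF : ∀ i ∈ F, FiniteDimensional ℂ (p i) := fun i hi =>
      hfd i (Finset.mem_insert_of_mem hi)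
    obtain ⟨ih1, ih2⟩ := ih hfdF
    haveI := ih1
    haveI := hfd a (Finset.mem_insert_self a F)
    have hsup : (⨆ i ∈ insert a F, p i) = p a ⊔ ⨆ i ∈ F, p i := by
      rw [Finset.iSup_insert]
    have hdisj : p a ⊓ (⨆ i ∈ F, p i) = ⊥ := by
      have hle : (⨆ i ∈ F, p i) ≤ (p a)ᗮ := by
        refine iSup₂_le fun i hi => ?_
        intro x hx
        rw [Submodule.mem_orthogonal]
        intro u hu
        exact horth a i (by rintro rfl; exact ha hi) u hu x hx
      have h2 : p a ⊓ (⨆ i ∈ F, p i) ≤ p a ⊓ (p a)ᗮ := inf_le_inf_left _ hle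
      rw [(Submodule.orthogonal_disjoint (p a)).eq_bot] at h2
      exact le_bot_iff.1 h2
    haveI hfdsup : FiniteDimensional ℂ ↥(p a ⊔ ⨆ i ∈ F, p i) :=
      Submodule.finiteDimensional_sup _ _
    constructor
    · rw [hsup]; exact hfdsup
    · have hkey := Submodule.finrank_sup_add_finrank_inf_eq (p a) (⨆ i ∈ F, p i)
      rw [hdisj] at hkey
      simp only [finrank_bot, add_zero] at hkey
      rw [hsup, Finset.sum_insert ha, ← ih2]
      exact hkey

lemma eig_orth {T : H →L[ℂ] H} (hsa : IsSelfAdjoint T) {μ ν : ℂ} (hμν : μ ≠ ν) :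
    ∀ x ∈ Module.End.eigenspace (T : H →ₗ[ℂ] H) μ,
    ∀ y ∈ Module.End.eigenspace (T : H →ₗ[ℂ] H) ν, ⟪x, y⟫ = 0 := by
  intro x hx y hy
  have hof := hsa.isSymmetric.orthogonalFamily_eigenspaces
  exact hof hμν (⟨x, hx⟩ : Module.End.eigenspace (T : H →ₗ[ℂ] H) μ)
    (⟨y, hy⟩ : Module.End.eigenspace (T : H →ₗ[ℂ] H) ν)

lemma topSp_count (T : H →L[ℂ] H) (hc : IsCompactOperator T) (hsa : IsSelfAdjoint T)
    {c : ℝ} (hcpos : 0 < c) (hfin : eigCount T (Set.Ioi c) ≠ ⊤) :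
    FiniteDimensional ℂ (topSp T c)
      ∧ ((Module.finrank ℂ (topSp T c) : ℝ≥0∞)) = eigCount T (Set.Ioi c) := by
  classical
  set p : Set.Ioi c → Submodule ℂ H :=
    fun μ => Module.End.eigenspace (T : H →ₗ[ℂ] H) ((μ : ℝ) : ℂ) with hp
  have hfd : ∀ μ : Set.Ioi c, FiniteDimensional ℂ (p μ) := by
    intro μ
    refine eig_finiteDimensional T hc ?_
    have h0 : (0 : ℝ) < (μ : ℝ) := hcpos.trans μ.2
    exact Complex.ofReal_ne_zero.2 h0.ne'
  have horth : ∀ i j : Set.Ioi c, i ≠ j → ∀ x ∈ p i, ∀ y ∈ p j, ⟪x, y⟫ = 0 := by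
    intro i j hij
    refine eig_orth hsa ?_
    have : (i : ℝ) ≠ (j : ℝ) := fun h => hij (Subtype.ext h)
    exact fun h => this (by exact_mod_cast h)
  -- the support is finite
  have hsupp : {μ : Set.Ioi c | p μ ≠ ⊥}.Finite := by
    by_contra hinf
    haveI := (show Set.Infinite {μ : Set.Ioi c | p μ ≠ ⊥} from hinf).to_subtype
    have h1 : ∀ x : {μ : Set.Ioi c | p μ ≠ ⊥},
        (1 : ℝ≥0∞) ≤ (Module.finrank ℂ (p x.1) : ℝ≥0∞) := by
      intro x
      haveI := hfd x.1
      have h0 : Module.finrank ℂ (p x.1) ≠ 0 := by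
        simp only [ne_eq, Submodule.finrank_eq_zero]
        exact x.2
      exact_mod_cast Nat.one_le_iff_ne_zero.2 h0
    have h2 : (⊤ : ℝ≥0∞) ≤ eigCount T (Set.Ioi c) := by
      have e1 : (⊤ : ℝ≥0∞) = ∑' _ : {μ : Set.Ioi c | p μ ≠ ⊥}, (1 : ℝ≥0∞) :=
        (ENNReal.tsum_const_eq_top_of_ne_zero one_ne_zero).symm
      rw [e1]
      calc ∑' x : {μ : Set.Ioi c | p μ ≠ ⊥}, (1 : ℝ≥0∞)
          ≤ ∑' x : {μ : Set.Ioi c | p μ ≠ ⊥}, (Module.finrank ℂ (p x.1) : ℝ≥0∞) :=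
            ENNReal.tsum_le_tsum h1
        _ ≤ ∑' μ : Set.Ioi c, (Module.finrank ℂ (p μ) : ℝ≥0∞) :=
            ENNReal.tsum_comp_le_tsum_of_injective Subtype.coe_injective _
        _ = eigCount T (Set.Ioi c) := rfl
    exact hfin (top_le_iff.1 h2)
  set F := hsupp.toFinset with hF
  have hoff : ∀ μ : Set.Ioi c, μ ∉ F → Module.finrank ℂ (p μ) = 0 := by
    intro μ hμ
    rw [hF, Set.Finite.mem_toFinset] at hμ
    simp only [Set.mem_setOf_eq, not_not] at hμ
    rw [hμ]
    exact finrank_bot ℂ H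
  have hEq1 : eigCount T (Set.Ioi c) = ∑ μ ∈ F, (Module.finrank ℂ (p μ) : ℝ≥0∞) := by
    refine tsum_eq_sum ?_
    intro μ hμ
    rw [hoff μ hμ]
    simp
  have htop : topSp T c = ⨆ μ ∈ F, p μ := by
    apply le_antisymm
    · refine iSup_le fun μ => ?_
      by_cases h : μ ∈ F
      · exact le_biSup p h
      · rw [hF, Set.Finite.mem_toFinset] at h
        simp only [Set.mem_setOf_eq, not_not] at h
        rw [show Module.End.eigenspace (T : H →ₗ[ℂ] H) ((μ : ℝ) : ℂ) = p μ from rfl, h]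
        exact bot_le
    · exact iSup₂_le fun μ _ => le_iSup _ μ
  obtain ⟨h1, h2⟩ := finrank_biSup_orth p horth F (fun i _ => hfd i)
  constructor
  · rw [htop]; exact h1
  · rw [htop, hEq1, h2]
    push_cast
    rfl

end finrk

section weyl
variable {H : Type*} [NormedAddCommGroup H] [InnerProductSpace ℂ H] [CompleteSpace H]

local notation "⟪" x ", " y "⟫" => @inner ℂ _ _ x y

set_option maxHeartbeats 1000000 in
lemma weyl_ineq (A B : H →L[ℂ] H) (hAc : IsCompactOperator A) (hAsa : IsSelfAdjoint A)
    (hBc : IsCompactOperator B) (hBsa : IsSelfAdjoint B)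
    {cA cB : ℝ} (hcA : 0 < cA) (hcB : 0 < cB) :
    eigCount (A + B) (Set.Ioi (cA + cB)) ≤ eigCount A (Set.Ioi cA) + eigCount B (Set.Ioi cB) := by
  classical
  by_cases hA : eigCount A (Set.Ioi cA) = ⊤
  · rw [hA, top_add]; exact le_top
  by_cases hB : eigCount B (Set.Ioi cB) = ⊤
  · rw [hB, add_top]; exact le_top
  obtain ⟨hKAfd, hKAr⟩ := topSp_count A hAc hAsa hcA hA
  obtain ⟨hKBfd, hKBr⟩ := topSp_count B hBc hBsa hcB hB
  haveI := hKAfd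
  haveI := hKBfd
  set s := cA + cB with hs
  have hspos : 0 < s := by positivity
  have hABc : IsCompactOperator ⇑(A + B) := by
    have h := hAc.add hBc
    rwa [show ⇑A + ⇑B = ⇑(A + B) from rfl] at h
  have hABsa : IsSelfAdjoint (A + B) := hAsa.add hBsa
  set p : Set.Ioi s → Submodule ℂ H :=
    fun μ => Module.End.eigenspace ((A + B : H →L[ℂ] H) : H →ₗ[ℂ] H) ((μ : ℝ) : ℂ) with hp
  have hfd : ∀ μ : Set.Ioi s, FiniteDimensional ℂ (p μ) := by
    intro μ
    refine eig_finiteDimensional (A + B) hABc ?_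
    have h0 : (0 : ℝ) < (μ : ℝ) := hspos.trans μ.2
    exact Complex.ofReal_ne_zero.2 h0.ne'
  have horth : ∀ i j : Set.Ioi s, i ≠ j → ∀ x ∈ p i, ∀ y ∈ p j, ⟪x, y⟫ = 0 := by
    intro i j hij
    refine eig_orth hABsa ?_
    have h1 : (i : ℝ) ≠ (j : ℝ) := fun h => hij (Subtype.ext h)
    exact fun h => h1 (by exact_mod_cast h)
  have key : ∀ F : Finset (Set.Ioi s),
      (∑ μ ∈ F, (Module.finrank ℂ (p μ) : ℝ≥0∞))
        ≤ eigCount A (Set.Ioi cA) + eigCount B (Set.Ioi cB) := by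
    intro F
    obtain ⟨hWfd, hWr⟩ := finrank_biSup_orth p horth F (fun i _ => hfd i)
    haveI := hWfd
    set W := ⨆ μ ∈ F, p μ with hW
    -- quadratic form bound on W
    have hQ : ∀ x ∈ W, x ≠ 0 → s * ‖x‖ ^ 2 < (⟪(A + B) x, x⟫).re := by
      intro x hxW hx0
      obtain ⟨f, hfsum⟩ := (Submodule.mem_iSup_finset_iff_exists_sum p x).1 hxW
      have hTf : ∀ μ : Set.Ioi s, (A + B) (f μ : H) = ((μ : ℝ) : ℂ) • (f μ : H) :=
        fun μ => Module.End.mem_eigenspace_iff.1 (f μ).2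
      have hinner : ∀ μ ∈ F, ⟪(f μ : H), x⟫ = (‖(f μ : H)‖ ^ 2 : ℝ) := by
        intro μ hμ
        rw [← hfsum, inner_sum]
        rw [Finset.sum_eq_single μ]
        · rw [@inner_self_eq_norm_sq_to_K ℂ]
          norm_cast
        · intro ν hν hνμ
          exact horth μ ν (fun h => hνμ h.symm) _ (f μ).2 _ (f ν).2
        · intro h; exact absurd hμ h
      have hre : (⟪(A + B) x, x⟫).re = ∑ μ ∈ F, (μ : ℝ) * ‖(f μ : H)‖ ^ 2 := by
        have h1 : (A + B) x = ∑ μ ∈ F, ((μ : ℝ) : ℂ) • (f μ : H) := by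
          rw [← hfsum, map_sum]
          exact Finset.sum_congr rfl fun μ _ => hTf μ
        rw [h1, sum_inner]
        rw [Complex.re_sum]
        refine Finset.sum_congr rfl fun μ hμ => ?_
        rw [inner_smul_left, Complex.conj_ofReal, hinner μ hμ, ← Complex.ofReal_mul,
          Complex.ofReal_re]
      have hnx : ‖x‖ ^ 2 = ∑ μ ∈ F, ‖(f μ : H)‖ ^ 2 := by
        have h1 : (⟪x, x⟫).re = ‖x‖ ^ 2 := by
          have h := inner_self_eq_norm_sq (𝕜 := ℂ) (E := H) x
          simpa using h
        rw [← h1]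
        have h2 : (⟪x, x⟫) = ∑ μ ∈ F, ⟪((f μ : H)), x⟫ := by
          nth_rewrite 1 [← hfsum]
          rw [sum_inner]
        rw [h2, Complex.re_sum]
        refine Finset.sum_congr rfl fun μ hμ => ?_
        rw [hinner μ hμ, Complex.ofReal_re]
      -- some component is nonzero
      have hex : ∃ μ ∈ F, (f μ : H) ≠ 0 := by
        by_contra hall
        push_neg at hall
        apply hx0
        rw [← hfsum]
        exact Finset.sum_eq_zero (fun μ hμ => hall μ hμ)
      obtain ⟨μ₀, hμ₀F, hμ₀⟩ := hex
      have hlt : ∑ μ ∈ F, s * ‖(f μ : H)‖ ^ 2 < ∑ μ ∈ F, (μ : ℝ) * ‖(f μ : H)‖ ^ 2 := by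
        refine Finset.sum_lt_sum (fun μ hμ => ?_) ⟨μ₀, hμ₀F, ?_⟩
        · exact mul_le_mul_of_nonneg_right (le_of_lt μ.2) (sq_nonneg _)
        · have hpos : 0 < ‖(f μ₀ : H)‖ ^ 2 := by
            have h := norm_pos_iff.2 hμ₀
            positivity
          exact mul_lt_mul_of_pos_right μ₀.2 hpos
      rw [hre, hnx, Finset.mul_sum]
      exact hlt
    -- inject W into KA × KB
    haveI : CompleteSpace (topSp A cA) := FiniteDimensional.complete ℂ _
    haveI : CompleteSpace (topSp B cB) := FiniteDimensional.complete ℂ _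
    set φ : W →ₗ[ℂ] (topSp A cA) × (topSp B cB) :=
      LinearMap.prod
        ((Submodule.orthogonalProjectionOnto (topSp A cA)).toLinearMap.comp W.subtype)
        ((Submodule.orthogonalProjectionOnto (topSp B cB)).toLinearMap.comp W.subtype) with hφ
    have hφinj : Function.Injective φ := by
      rw [← LinearMap.ker_eq_bot]
      rw [Submodule.eq_bot_iff]
      rintro z hz
      rw [LinearMap.mem_ker, hφ] at hz
      have hz1 : Submodule.orthogonalProjectionOnto (topSp A cA) (z : H) = 0 := congrArg Prod.fst hz
      have hz2 : Submodule.orthogonalProjectionOnto (topSp B cB) (z : H) = 0 := congrArg Prod.snd hz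
      have hzA : (z : H) ∈ (topSp A cA)ᗮ := Submodule.orthogonalProjectionOnto_eq_zero_iff.1 hz1
      have hzB : (z : H) ∈ (topSp B cB)ᗮ := Submodule.orthogonalProjectionOnto_eq_zero_iff.1 hz2
      have hA' := quad_le_on_orth A hAc hAsa hcA (z : H) hzA
      have hB' := quad_le_on_orth B hBc hBsa hcB (z : H) hzB
      by_contra hz0
      have hzne : (z : H) ≠ 0 := fun h => hz0 (Subtype.ext h)
      have hq := hQ (z : H) z.2 hzne
      have hsplit : (⟪(A + B) (z : H), (z : H)⟫).re
          = (⟪A (z : H), (z : H)⟫).re + (⟪B (z : H), (z : H)⟫).re := by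
        rw [ContinuousLinearMap.add_apply, inner_add_left, Complex.add_re]
      rw [hsplit] at hq
      nlinarith [hq, hA', hB']
    have hfr : Module.finrank ℂ W ≤ Module.finrank ℂ (topSp A cA)
        + Module.finrank ℂ (topSp B cB) := by
      have h1 := LinearMap.finrank_le_finrank_of_injective hφinj
      rwa [Module.finrank_prod] at h1
    calc (∑ μ ∈ F, (Module.finrank ℂ (p μ) : ℝ≥0∞))
        = ((∑ μ ∈ F, Module.finrank ℂ (p μ) : ℕ) : ℝ≥0∞) := by push_cast; rfl
      _ = (Module.finrank ℂ W : ℝ≥0∞) := by rw [hWr]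
      _ ≤ ((Module.finrank ℂ (topSp A cA) + Module.finrank ℂ (topSp B cB) : ℕ) : ℝ≥0∞) := by
          exact_mod_cast hfr
      _ = eigCount A (Set.Ioi cA) + eigCount B (Set.Ioi cB) := by
          push_cast
          rw [hKAr, hKBr]
  rw [show eigCount (A + B) (Set.Ioi s) = ∑' μ : Set.Ioi s,
    (Module.finrank ℂ (p μ) : ℝ≥0∞) from rfl, ENNReal.tsum_eq_iSup_sum]
  exact iSup_le key

end weyl

section integration
variable {H : Type*} [NormedAddCommGroup H] [InnerProductSpace ℂ H] [CompleteSpace H]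

local notation "⟪" x ", " y "⟫" => @inner ℂ _ _ x y

/-- Representation of the counting function of `t • T₂` via eigenvalues of `T₂`. -/
lemma eigCount_smul_repr (T₂ : H →L[ℂ] H) {c : ℝ} (hc : 0 < c) (t : ℝ) :
    eigCount ((t : ℂ) • T₂) (Set.Ioi c)
      = ∑' ν : ℝ, (if c < t * ν then
          (Module.finrank ℂ (Module.End.eigenspace (T₂ : H →ₗ[ℂ] H) (ν : ℂ)) : ℝ≥0∞) else 0) := by
  classical
  set m : ℝ → ℝ≥0∞ :=
    fun ν => (Module.finrank ℂ (Module.End.eigenspace (T₂ : H →ₗ[ℂ] H) (ν : ℂ)) : ℝ≥0∞) with hm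
  by_cases ht : t = 0
  · subst ht
    have hL : eigCount (((0 : ℝ) : ℂ) • T₂) (Set.Ioi c) = 0 := by
      rw [eigCount]
      rw [ENNReal.summable.tsum_eq_zero_iff]
      intro μ
      have h1 : Module.End.eigenspace ((((0 : ℝ) : ℂ) • T₂ : H →L[ℂ] H) : H →ₗ[ℂ] H)
          (((μ : ℝ) : ℂ)) = ⊥ := by
        rw [Submodule.eq_bot_iff]
        intro x hx
        have h2 := Module.End.mem_eigenspace_iff.1 hx
        have h3 : ((μ : ℝ) : ℂ) • x = 0 := by
          rw [← h2]
          simp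
        have h4 : ((μ : ℝ) : ℂ) ≠ 0 :=
          Complex.ofReal_ne_zero.2 (hc.trans μ.2).ne'
        exact (smul_eq_zero.1 h3).resolve_left h4
      rw [h1]
      simp
    rw [hL]
    symm
    rw [ENNReal.summable.tsum_eq_zero_iff]
    intro ν
    have h0 : ¬ c < (0 : ℝ) * ν := by
      rw [zero_mul]
      exact not_lt.2 hc.le
    exact if_neg h0
  · -- t ≠ 0
    have hstep1 : ∀ μ : Set.Ioi c,
        Module.End.eigenspace (((t : ℂ) • T₂ : H →L[ℂ] H) : H →ₗ[ℂ] H) (((μ : ℝ) : ℂ))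
          = Module.End.eigenspace (T₂ : H →ₗ[ℂ] H) ((((μ : ℝ) / t : ℝ)) : ℂ) := by
      intro μ
      rw [eig_smul T₂ (Complex.ofReal_ne_zero.2 ht)]
      congr 1
      push_cast
      rfl
    have hL : eigCount ((t : ℂ) • T₂) (Set.Ioi c) = ∑' μ : Set.Ioi c, m ((μ : ℝ) / t) := by
      rw [eigCount]
      exact tsum_congr fun μ => by rw [hstep1 μ]
    set S : Set ℝ := {ν : ℝ | c < t * ν} with hS
    have he : ∀ ν : S, t * (ν : ℝ) / t = (ν : ℝ) := fun ν => by
      field_simp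
    set e : S ≃ Set.Ioi c :=
      { toFun := fun ν => ⟨t * (ν : ℝ), ν.2⟩
        invFun := fun μ => ⟨(μ : ℝ) / t, by
          have : t * ((μ : ℝ) / t) = (μ : ℝ) := by field_simp
          simp only [hS, Set.mem_setOf_eq, this]
          exact μ.2⟩
        left_inv := fun ν => by
          ext
          simp only []
          field_simp
        right_inv := fun μ => by
          ext
          simp only []
          field_simp } with hedef
    have hL2 : ∑' μ : Set.Ioi c, m ((μ : ℝ) / t) = ∑' ν : S, m (ν : ℝ) := by
      rw [← Equiv.tsum_eq e (fun μ : Set.Ioi c => m ((μ : ℝ) / t))]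
      refine tsum_congr fun ν => ?_
      congr 1
      exact he ν
    have hL3 : ∑' ν : S, m (ν : ℝ) = ∑' ν : ℝ, (if c < t * ν then m ν else 0) := by
      rw [tsum_subtype S m]
      refine tsum_congr fun ν => ?_
      rw [Set.indicator_apply]
      simp [hS]
    rw [hL, hL2, hL3]

/-- Bound for the weighted measure of `{t | c < t ν}`. -/
lemma cauchy_tail_bound {c : ℝ} (hc : 0 < c) {ν : ℝ} (hν : ν ≠ 0) :
    (∫⁻ t in {t : ℝ | c < t * ν}, ENNReal.ofReal ((1 + t ^ 2)⁻¹))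
      ≤ ENNReal.ofReal (|ν| / c) := by
  have hnn : 0 ≤ᵐ[volume] fun t : ℝ => (1 + t ^ 2)⁻¹ :=
    Filter.Eventually.of_forall fun t => by positivity
  rcases lt_or_gt_of_ne hν with hneg | hpos
  · -- ν < 0 : the set is Iio (c/ν)
    have hset : {t : ℝ | c < t * ν} = Set.Iio (c / ν) := by
      ext t
      simp only [Set.mem_setOf_eq, Set.mem_Iio]
      rw [lt_div_iff_of_neg hneg]
    rw [hset]
    have hae : (Set.Iio (c / ν) : Set ℝ) =ᵐ[volume] Set.Iic (c / ν) := Iio_ae_eq_Iic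
    rw [MeasureTheory.setLIntegral_congr hae]
    have hnn' : 0 ≤ᵐ[volume.restrict (Set.Iic (c / ν))] fun t : ℝ => (1 + t ^ 2)⁻¹ :=
      MeasureTheory.ae_restrict_of_ae hnn
    rw [← MeasureTheory.ofReal_integral_eq_lintegral_ofReal
      (integrable_inv_one_add_sq.integrableOn) hnn']
    rw [integral_Iic_inv_one_add_sq]
    apply ENNReal.ofReal_le_ofReal
    have hν' : 0 < -ν := neg_pos.2 hneg
    have h1 : 0 < c / (-ν) := div_pos hc hν'
    have h2 : Real.arctan ((c / (-ν))⁻¹) = Real.pi / 2 - Real.arctan (c / (-ν)) :=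
      Real.arctan_inv_of_pos h1
    have h3 : (c / (-ν))⁻¹ = (-ν) / c := by rw [inv_div]
    have h4 : Real.arctan (c / ν) = - Real.arctan (c / (-ν)) := by
      rw [show c / ν = -(c / -ν) by rw [div_neg, neg_neg], Real.arctan_neg]
    have h5 : Real.arctan ((-ν) / c) ≤ (-ν) / c :=
      arctan_le_self' (div_nonneg hν'.le hc.le)
    have h6 : |ν| = -ν := abs_of_neg hneg
    rw [h6, h4]
    rw [h3] at h2
    linarith
  · -- 0 < ν : the set is Ioi (c/ν)
    have hset : {t : ℝ | c < t * ν} = Set.Ioi (c / ν) := by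
      ext t
      simp only [Set.mem_setOf_eq, Set.mem_Ioi]
      rw [div_lt_iff₀ hpos]
    rw [hset]
    have hnn' : 0 ≤ᵐ[volume.restrict (Set.Ioi (c / ν))] fun t : ℝ => (1 + t ^ 2)⁻¹ :=
      MeasureTheory.ae_restrict_of_ae hnn
    rw [← MeasureTheory.ofReal_integral_eq_lintegral_ofReal
      (integrable_inv_one_add_sq.integrableOn) hnn']
    rw [integral_Ioi_inv_one_add_sq]
    apply ENNReal.ofReal_le_ofReal
    have h1 : 0 < c / ν := div_pos hc hpos
    have h2 : Real.arctan ((c / ν)⁻¹) = Real.pi / 2 - Real.arctan (c / ν) :=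
      Real.arctan_inv_of_pos h1
    have h3 : (c / ν)⁻¹ = ν / c := by rw [inv_div]
    have h5 : Real.arctan (ν / c) ≤ ν / c := arctan_le_self' (div_nonneg hpos.le hc.le)
    have h6 : |ν| = ν := abs_of_pos hpos
    rw [h6]
    rw [h3] at h2
    linarith

lemma traceNormE_neg (T : H →L[ℂ] H) : traceNormE (-T) = traceNormE T := by
  have h : ∀ μ : ℝ, Module.End.eigenspace ((-T : H →L[ℂ] H) : H →ₗ[ℂ] H) (μ : ℂ)
      = Module.End.eigenspace (T : H →ₗ[ℂ] H) (((-μ : ℝ)) : ℂ) := by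
    intro μ
    rw [eig_neg]
    congr 1
    push_cast
    rfl
  rw [traceNormE, traceNormE]
  have h2 : ∀ μ : ℝ,
      (Module.finrank ℂ (Module.End.eigenspace ((-T : H →L[ℂ] H) : H →ₗ[ℂ] H) (μ : ℂ)) : ℝ≥0∞)
        * ENNReal.ofReal |μ|
      = (Module.finrank ℂ (Module.End.eigenspace (T : H →ₗ[ℂ] H) (((-μ : ℝ)) : ℂ)) : ℝ≥0∞)
        * ENNReal.ofReal |(-μ : ℝ)| := by
    intro μ
    rw [h μ, abs_neg]
  rw [tsum_congr h2]
  exact (Equiv.neg ℝ).tsum_eq fun μ =>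
    (Module.finrank ℂ (Module.End.eigenspace (T : H →ₗ[ℂ] H) (μ : ℂ)) : ℝ≥0∞)
      * ENNReal.ofReal |μ|

end integration

section main
variable {H : Type*} [NormedAddCommGroup H] [InnerProductSpace ℂ H] [CompleteSpace H]

set_option maxHeartbeats 1000000 in
lemma half_estimate (T₁ T₂ : H →L[ℂ] H) (h₁c : IsCompactOperator T₁) (h₁sa : IsSelfAdjoint T₁)
    (h₂c : IsCompactOperator T₂) (h₂sa : IsSelfAdjoint T₂) (h₂tr : traceNormE T₂ ≠ ⊤)
    (s : ℝ) (hs : 0 < s) :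
    (∫⁻ t : ℝ, eigCount (T₁ + (t : ℂ) • T₂) (Set.Ioi s) * ENNReal.ofReal ((1 + t ^ 2)⁻¹))
        ≤ ENNReal.ofReal Real.pi * eigCount T₁ (Set.Ioi (s / 2))
          + ENNReal.ofReal (2 / s) * traceNormE T₂ := by
  classical
  set c : ℝ := s / 2 with hcdef
  have hc : 0 < c := by positivity
  set m : ℝ → ℝ≥0∞ :=
    fun ν => (Module.finrank ℂ (Module.End.eigenspace (T₂ : H →ₗ[ℂ] H) (ν : ℂ)) : ℝ≥0∞) with hm
  set w : ℝ → ℝ≥0∞ := fun t => ENNReal.ofReal ((1 + t ^ 2)⁻¹) with hw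
  have hw_meas : Measurable w := by
    apply ENNReal.measurable_ofReal.comp
    have hcont : Continuous fun t : ℝ => (1 + t ^ 2)⁻¹ :=
      (continuous_const.add (continuous_pow 2)).inv₀ fun t => (by positivity : (1 : ℝ) + t ^ 2 ≠ 0)
    exact hcont.measurable
  set nA : ℝ≥0∞ := eigCount T₁ (Set.Ioi c) with hnA
  set G : ℝ → ℝ≥0∞ := fun t => ∑' ν : ℝ, (if c < t * ν then m ν else 0) with hG
  -- pointwise Weyl bound
  have hpt : ∀ t : ℝ, eigCount (T₁ + (t : ℂ) • T₂) (Set.Ioi s) ≤ nA + G t := by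
    intro t
    have hsmul_c : IsCompactOperator ⇑((t : ℂ) • T₂) := by
      have h := h₂c.smul (t : ℂ)
      rwa [← ContinuousLinearMap.coe_smul'] at h
    have hsmul_sa : IsSelfAdjoint ((t : ℂ) • T₂) := by
      have hstar : star ((t : ℂ) • T₂) = (t : ℂ) • T₂ := by
        rw [star_smul, h₂sa.star_eq, Complex.star_def, Complex.conj_ofReal]
      exact hstar
    have hweyl := weyl_ineq T₁ ((t : ℂ) • T₂) h₁c h₁sa hsmul_c hsmul_sa hc hc
    rw [show c + c = s by rw [hcdef]; ring] at hweyl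
    rw [eigCount_smul_repr T₂ hc t] at hweyl
    exact hweyl
  have hπ : ∫⁻ t : ℝ, w t = ENNReal.ofReal Real.pi := by
    have hnn : 0 ≤ᵐ[volume] fun t : ℝ => (1 + t ^ 2)⁻¹ :=
      Filter.Eventually.of_forall fun t => by positivity
    rw [hw]
    rw [← MeasureTheory.ofReal_integral_eq_lintegral_ofReal integrable_inv_one_add_sq hnn]
    rw [integral_univ_inv_one_add_sq]
  -- countable support
  set D : Set ℝ := Function.support (fun ν => m ν * ENNReal.ofReal |ν|) with hD
  have hDc : D.Countable := by
    apply Summable.countable_support_ennreal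
    exact h₂tr
  haveI := hDc.to_subtype
  have hGD : ∀ t : ℝ, G t = ∑' ν : D, (if c < t * (ν : ℝ) then m (ν : ℝ) else 0) := by
    intro t
    have hGt : G t = ∑' ν : ℝ, (if c < t * ν then m ν else 0) := rfl
    rw [hGt]
    symm
    apply tsum_subtype_eq_of_support_subset
      (f := fun ν : ℝ => if c < t * ν then m ν else 0) (s := D)
    intro ν hν
    simp only [Function.mem_support] at hν
    by_cases hcase : c < t * ν
    · rw [if_pos hcase] at hν
      have hν0 : ν ≠ 0 := by
        rintro rfl
        rw [mul_zero] at hcase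
        exact absurd hcase (not_lt.2 hc.le)
      rw [hD, Function.mem_support]
      exact mul_ne_zero hν (by simp [hν0])
    · rw [if_neg hcase] at hν
      exact absurd rfl hν
  -- measurability of summands
  have hSmeas : ∀ ν : ℝ, MeasurableSet {t : ℝ | c < t * ν} :=
    fun ν => measurableSet_lt measurable_const (measurable_id.mul_const ν)
  have hterm_meas : ∀ ν : ℝ, Measurable fun t => (if c < t * ν then m ν else 0) * w t := by
    intro ν
    apply Measurable.mul ?_ hw_meas
    exact Measurable.ite (hSmeas ν) measurable_const measurable_const
  -- per-term integral
  have hterm : ∀ ν : ℝ, ν ≠ 0 →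
      (∫⁻ t : ℝ, (if c < t * ν then m ν else 0) * w t)
        ≤ m ν * ENNReal.ofReal (|ν| / c) := by
    intro ν hν
    have h1 : (fun t : ℝ => (if c < t * ν then m ν else 0) * w t)
        = Set.indicator {t : ℝ | c < t * ν} (fun t => m ν * w t) := by
      funext t
      rw [Set.indicator_apply]
      by_cases h : c < t * ν
      · rw [if_pos h, if_pos (by exact h)]
      · rw [if_neg h, if_neg (by exact h), zero_mul]
    rw [h1, MeasureTheory.lintegral_indicator (hSmeas ν)]
    rw [MeasureTheory.lintegral_const_mul _ hw_meas]
    exact mul_le_mul_right (cauchy_tail_bound hc hν) _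
  -- assembling
  calc (∫⁻ t : ℝ, eigCount (T₁ + (t : ℂ) • T₂) (Set.Ioi s) * w t)
      ≤ ∫⁻ t : ℝ, (nA + G t) * w t :=
        MeasureTheory.lintegral_mono fun t => mul_le_mul_left (hpt t) _
    _ = ∫⁻ t : ℝ, (nA * w t + G t * w t) := by
        refine MeasureTheory.lintegral_congr fun t => ?_
        rw [add_mul]
    _ = (∫⁻ t : ℝ, nA * w t) + ∫⁻ t : ℝ, G t * w t :=
        MeasureTheory.lintegral_add_left (measurable_const.mul hw_meas) _
    _ = nA * ENNReal.ofReal Real.pi + ∫⁻ t : ℝ, G t * w t := by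
        rw [MeasureTheory.lintegral_const_mul _ hw_meas, hπ]
    _ ≤ nA * ENNReal.ofReal Real.pi + ENNReal.ofReal (2 / s) * traceNormE T₂ := by
        refine add_le_add_right ?_ _
        have e1 : (∫⁻ t : ℝ, G t * w t)
            = ∑' ν : D, ∫⁻ t : ℝ, (if c < t * (ν : ℝ) then m (ν : ℝ) else 0) * w t := by
          rw [show (fun t : ℝ => G t * w t)
              = fun t : ℝ => ∑' ν : D, (if c < t * (ν : ℝ) then m (ν : ℝ) else 0) * w t from
            funext fun t => by rw [hGD t, ENNReal.tsum_mul_right]]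
          exact MeasureTheory.lintegral_tsum fun ν => (hterm_meas (ν : ℝ)).aemeasurable
        rw [e1]
        have hν0 : ∀ ν : D, (ν : ℝ) ≠ 0 := by
          rintro ⟨ν, hν⟩ rfl
          rw [hD, Function.mem_support] at hν
          simp at hν
        calc (∑' ν : D, ∫⁻ t : ℝ, (if c < t * (ν : ℝ) then m (ν : ℝ) else 0) * w t)
            ≤ ∑' ν : D, m (ν : ℝ) * ENNReal.ofReal (|(ν : ℝ)| / c) :=
              ENNReal.tsum_le_tsum fun ν => hterm (ν : ℝ) (hν0 ν)
          _ = ∑' ν : D, ENNReal.ofReal (2 / s) * (m (ν : ℝ) * ENNReal.ofReal |(ν : ℝ)|) := by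
              refine tsum_congr fun ν => ?_
              have harith : |(ν : ℝ)| / c = 2 / s * |(ν : ℝ)| := by
                rw [hcdef]
                field_simp
              rw [harith, ENNReal.ofReal_mul (by positivity)]
              ring
          _ = ENNReal.ofReal (2 / s) * ∑' ν : D, (m (ν : ℝ) * ENNReal.ofReal |(ν : ℝ)|) :=
              ENNReal.tsum_mul_left
          _ ≤ ENNReal.ofReal (2 / s) * traceNormE T₂ := by
              refine mul_le_mul_right ?_ _
              exact ENNReal.tsum_comp_le_tsum_of_injective Subtype.coe_injective
                fun ν => m ν * ENNReal.ofReal |ν|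
    _ = ENNReal.ofReal Real.pi * eigCount T₁ (Set.Ioi (s / 2))
        + ENNReal.ofReal (2 / s) * traceNormE T₂ := by
        rw [mul_comm, hnA, hcdef]

end main

/-- Pushnitski's estimate: for compact self-adjoint `T₁` and self-adjoint trace-class `T₂`,
`(1/π)∫ n_±(s; T₁ + t T₂) dt/(1+t²) ≤ n_±(s/2; T₁) + (2/(πs))‖T₂‖₁`, i.e. multiplying by `π`,
`∫ n_±(s; T₁ + t T₂) dt/(1+t²) ≤ π n_±(s/2; T₁) + (2/s)‖T₂‖₁`. -/
theorem integral_counting_le {H : Type*} [NormedAddCommGroup H] [InnerProductSpace ℂ H]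
    [CompleteSpace H] [TopologicalSpace.SeparableSpace H]
    (T₁ T₂ : H →L[ℂ] H) (h₁c : IsCompactOperator T₁) (h₁sa : IsSelfAdjoint T₁)
    (h₂c : IsCompactOperator T₂) (h₂sa : IsSelfAdjoint T₂) (h₂tr : traceNormE T₂ ≠ ⊤)
    (s : ℝ) (hs : 0 < s) :
    (∫⁻ t : ℝ, eigCount (T₁ + (t : ℂ) • T₂) (Set.Ioi s) * ENNReal.ofReal ((1 + t ^ 2)⁻¹))
        ≤ ENNReal.ofReal Real.pi * eigCount T₁ (Set.Ioi (s / 2))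
          + ENNReal.ofReal (2 / s) * traceNormE T₂
    ∧ (∫⁻ t : ℝ, eigCount (-(T₁ + (t : ℂ) • T₂)) (Set.Ioi s) * ENNReal.ofReal ((1 + t ^ 2)⁻¹))
        ≤ ENNReal.ofReal Real.pi * eigCount (-T₁) (Set.Ioi (s / 2))
          + ENNReal.ofReal (2 / s) * traceNormE T₂ := by
  constructor
  · exact half_estimate T₁ T₂ h₁c h₁sa h₂c h₂sa h₂tr s hs
  · have h₁c' : IsCompactOperator ⇑(-T₁) := by
      have h := h₁c.neg
      rwa [show -⇑T₁ = ⇑(-T₁) from rfl] at h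
    have h₂c' : IsCompactOperator ⇑(-T₂) := by
      have h := h₂c.neg
      rwa [show -⇑T₂ = ⇑(-T₂) from rfl] at h
    have h₂tr' : traceNormE (-T₂) ≠ ⊤ := by rwa [traceNormE_neg]
    have hmain := half_estimate (-T₁) (-T₂) h₁c' h₁sa.neg h₂c' h₂sa.neg h₂tr' s hs
    rw [traceNormE_neg] at hmain
    have hop : ∀ t : ℝ, (-T₁) + (t : ℂ) • (-T₂) = -(T₁ + (t : ℂ) • T₂) := by
      intro t
      rw [smul_neg, neg_add]
    calc (∫⁻ t : ℝ, eigCount (-(T₁ + (t : ℂ) • T₂)) (Set.Ioi s)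
          * ENNReal.ofReal ((1 + t ^ 2)⁻¹))
        = (∫⁻ t : ℝ, eigCount ((-T₁) + (t : ℂ) • (-T₂)) (Set.Ioi s)
          * ENNReal.ofReal ((1 + t ^ 2)⁻¹)) := by
          refine MeasureTheory.lintegral_congr fun t => ?_
          rw [hop t]
      _ ≤ ENNReal.ofReal Real.pi * eigCount (-T₁) (Set.Ioi (s / 2))
          + ENNReal.ofReal (2 / s) * traceNormE T₂ := hmain
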